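/- The multiclass Littlestone dimension of the class of bijections from {1,...,n} to {1,...,n} (viewed as a hypothesis class mapping contexts {1,...,n} to labels {1,...,n}) is exactly n-1. -/

import Mathlib

/-- Multiclass Littlestone shattering: `MShatters H d` says there is a full
binary multiclass Littlestone tree of depth `d` (each internal node labeled by a
context, with two outgoing edges carrying distinct labels) shattered by `H`. -/
def MShatters {Z K : Type*} (H : Set (Z → K)) : ℕ → Prop
  | 0 => H.Nonempty
  | d + 1 => ∃ z : Z, ∃ k₁ k₂ : K, k₁ ≠ k₂ ∧
      MShatters {h ∈ H | h z = k₁} d ∧ MShatters {h ∈ H | h z = k₂} d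

lemma mshatters_nonempty {Z K : Type*} : ∀ {d : ℕ} {H : Set (Z → K)},
    MShatters H d → H.Nonempty := by
  intro d
  induction d with
  | zero => exact fun h => h
  | succ d ih =>
    rintro H ⟨z, k₁, k₂, _, s1, _⟩
    obtain ⟨h, hh, _⟩ := ih s1
    exact ⟨h, hh⟩

lemma mshatters_mono {Z K : Type*} : ∀ {d : ℕ} {H H' : Set (Z → K)},
    H ⊆ H' → MShatters H d → MShatters H' d := by
  intro d
  induction d with
  | zero => exact fun hs h => h.mono hs
  | succ d ih =>
    rintro H H' hs ⟨z, k₁, k₂, hne, s1, s2⟩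
    exact ⟨z, k₁, k₂, hne, ih (fun h hh => ⟨hs hh.1, hh.2⟩) s1,
      ih (fun h hh => ⟨hs hh.1, hh.2⟩) s2⟩

lemma mshatters_lower (n : ℕ) : ∀ (d : ℕ) (σ : Equiv.Perm (Fin n)) (A : Set (Fin n)),
    d + 1 ≤ (Aᶜ : Set (Fin n)).ncard →
    MShatters {h : Fin n → Fin n | Function.Bijective h ∧ ∀ z ∈ A, h z = σ z} d := by
  intro d
  induction d with
  | zero => exact fun σ A _ => ⟨σ, σ.bijective, fun z _ => rfl⟩
  | succ d ih =>
    intro σ A hA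
    have hfin : (Aᶜ : Set (Fin n)).Finite := Set.toFinite _
    obtain ⟨z₁, z₂, hz₁, hz₂, hzz⟩ := (Set.one_lt_ncard_iff hfin).mp (by omega)
    have hcompl : ((insert z₁ A)ᶜ : Set (Fin n)) = Aᶜ \ {z₁} := by
      ext x; simp [not_or, and_comm]
    have hcard : d + 1 ≤ ((insert z₁ A)ᶜ : Set (Fin n)).ncard := by
      rw [hcompl, Set.ncard_diff_singleton_of_mem hz₁]
      omega
    refine ⟨z₁, σ z₁, σ z₂, fun h => hzz (σ.injective h), ?_, ?_⟩
    · refine mshatters_mono ?_ (ih σ (insert z₁ A) hcard)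
      rintro h ⟨hb, hc⟩
      exact ⟨⟨hb, fun z hz => hc z (Set.mem_insert_of_mem _ hz)⟩,
        hc z₁ (Set.mem_insert _ _)⟩
    · refine mshatters_mono ?_ (ih ((Equiv.swap z₁ z₂).trans σ) (insert z₁ A) hcard)
      rintro h ⟨hb, hc⟩
      refine ⟨⟨hb, fun z hz => ?_⟩, ?_⟩
      · have := hc z (Set.mem_insert_of_mem _ hz)
        have e1 : z ≠ z₁ := by rintro rfl; exact hz₁ hz
        have e2 : z ≠ z₂ := by rintro rfl; exact hz₂ hz
        rwa [Equiv.trans_apply, Equiv.swap_apply_of_ne_of_ne e1 e2] at this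
      · have := hc z₁ (Set.mem_insert _ _)
        rwa [Equiv.trans_apply, Equiv.swap_apply_left] at this

lemma mshatters_upper (n : ℕ) : ∀ (d : ℕ) (H : Set (Fin n → Fin n)),
    (∀ h ∈ H, Function.Bijective h) → MShatters H (d + 1) →
    d + 1 + {z : Fin n | ∀ h ∈ H, ∀ h' ∈ H, h z = h' z}.ncard ≤ n - 1 := by
  intro d
  induction d with
  | zero =>
    rintro H hbij ⟨z, k₁, k₂, hne, s1, s2⟩
    obtain ⟨h₁, hh₁, hz₁⟩ := mshatters_nonempty s1
    obtain ⟨h₂, hh₂, hz₂⟩ := mshatters_nonempty s2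
    set C := {z' : Fin n | ∀ h ∈ H, ∀ h' ∈ H, h z' = h' z'} with hCdef
    obtain ⟨w, hw⟩ := (hbij h₁ hh₁).2 k₂
    have hwz : w ≠ z := by rintro rfl; exact hne (hz₁ ▸ hw)
    have hne2 : h₁ w ≠ h₂ w := by
      rw [hw]
      intro h
      exact hwz ((hbij h₂ hh₂).1 (h.symm.trans hz₂.symm))
    have hsub : C ⊆ ({z, w} : Set (Fin n))ᶜ := by
      intro z' hz'
      simp only [Set.mem_compl_iff, Set.mem_insert_iff, Set.mem_singleton_iff]
      rintro (rfl | rfl)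
      · exact hne (hz₁ ▸ hz₂ ▸ hz' h₁ hh₁ h₂ hh₂)
      · exact hne2 (hz' h₁ hh₁ h₂ hh₂)
    have e1 : ({z, w} : Set (Fin n)).ncard = 2 := Set.ncard_pair (Ne.symm hwz)
    have e2 : ({z, w} : Set (Fin n)).ncard + (({z, w} : Set (Fin n))ᶜ).ncard = n := by
      rw [Set.ncard_add_ncard_compl, Nat.card_eq_fintype_card, Fintype.card_fin]
    have e3 := Set.ncard_le_ncard hsub (Set.toFinite _)
    generalize hp : ((({z, w} : Set (Fin n))ᶜ).ncard) = p at e2 e3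
    generalize hq : C.ncard = q at e3 ⊢
    omega
  | succ d ih =>
    rintro H hbij ⟨z, k₁, k₂, hne, s1, s2⟩
    have key := ih {h ∈ H | h z = k₁} (fun h hh => hbij h hh.1) s1
    obtain ⟨h₁, hh₁, hz₁⟩ := mshatters_nonempty s1
    obtain ⟨h₂, hh₂, hz₂⟩ := mshatters_nonempty s2
    set C := {z' : Fin n | ∀ h ∈ H, ∀ h' ∈ H, h z' = h' z'} with hC
    set C₁ := {z' : Fin n | ∀ h ∈ {h ∈ H | h z = k₁}, ∀ h' ∈ {h ∈ H | h z = k₁}, h z' = h' z'}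
      with hC₁
    have hzC : z ∉ C := fun hz => hne (hz₁ ▸ hz₂ ▸ hz h₁ hh₁ h₂ hh₂)
    have hsub : insert z C ⊆ C₁ := by
      rintro z' (rfl | hz')
      · intro h hh h' hh'
        rw [hh.2, hh'.2]
      · intro h hh h' hh'
        exact hz' h hh.1 h' hh'.1
    have e1 : (insert z C).ncard = C.ncard + 1 :=
      Set.ncard_insert_of_notMem hzC (Set.toFinite _)
    have e2 := Set.ncard_le_ncard hsub (Set.toFinite _)
    omega

/-- The multiclass Littlestone dimension of the class of bijections
(permutations) of `{1,...,n}` is exactly `n - 1`. -/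
theorem stmt0 (n : ℕ) (hn : 1 ≤ n) :
    IsGreatest {d : ℕ | MShatters {h : Fin n → Fin n | Function.Bijective h} d} (n - 1) := by
  constructor
  · have hcard : (n - 1) + 1 ≤ ((∅ : Set (Fin n))ᶜ : Set (Fin n)).ncard := by
      rw [Set.compl_empty, Set.ncard_univ, Nat.card_eq_fintype_card, Fintype.card_fin]
      omega
    exact mshatters_mono (fun h hh => hh.1) (mshatters_lower n (n - 1) 1 ∅ hcard)
  · intro d hd
    match d with
    | 0 => omega
    | e + 1 =>
      have := mshatters_upper n e _ (fun _ h => h) hd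
      exact le_trans (Nat.le_add_right (e + 1) _) this
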